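/- Let X, Y be finite disjoint subsets of Γ. If A ∈ 𝔄_X⁻ and B ∈ 𝔄_Y⁻, then {A,B} = 0. Conversely, assuming the monomials supported in X ∪ Y are linearly independent in 𝔄: if A ∈ 𝔄_X, B ∈ 𝔄_Y and {A,B} = 0, then either A = 0, or B = 0, or both A ∈ 𝔄_X⁻ and B ∈ 𝔄_Y⁻. -/

import Mathlib

open scoped Classical

/-- The canonical anticommutation relations for a family `a x` of annihilation
operators in a C*-algebra. -/
def IsCAR {Γ A : Type*} [Ring A] [StarRing A] (a : Γ → A) : Prop :=
  (∀ x y, a x * a y + a y * a x = 0) ∧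
  (∀ x y, star (a x) * star (a y) + star (a y) * star (a x) = 0) ∧
  (∀ x y, a x * star (a y) + star (a y) * a x = if x = y then (1 : A) else 0)

/-- The four possible factors of a monomial at a site `x`:
`1`, `a x`, `a x *`, and `a x * a x`. -/
def carFactor {Γ A : Type*} [Ring A] [StarRing A] (a : Γ → A) (k : Fin 4) (x : Γ) : A :=
  match k with
  | 0 => 1
  | 1 => a x
  | 2 => star (a x)
  | 3 => star (a x) * a x

/-- The monomial with factor pattern `k` along the enumeration `l` of a finite set of sites. -/
def carMonomial {Γ A : Type*} [Ring A] [StarRing A] (a : Γ → A) (l : List Γ)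
    (k : Γ → Fin 4) : A :=
  (l.map fun x => carFactor a (k x) x).prod

/-- The number of odd factors (`a x` or `a x *`) of the monomial with pattern `k` along `l`. -/
def carOddCount {Γ : Type*} (l : List Γ) (k : Γ → Fin 4) : ℕ :=
  l.countP fun x => decide (k x = 1 ∨ k x = 2)

/-- `𝔄_X`: the linear span of the monomials supported in the finite set `X`. -/
def carSpan {Γ A : Type*} [Ring A] [StarRing A] [Algebra ℂ A] (a : Γ → A) (X : Finset Γ) :
    Submodule ℂ A :=
  Submodule.span ℂ {m | ∃ (l : List Γ) (k : Γ → Fin 4),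
    l.Nodup ∧ l.toFinset = X ∧ m = carMonomial a l k}

/-- `𝔄_X⁺`: the linear span of the even monomials supported in the finite set `X`. -/
def carSpanEven {Γ A : Type*} [Ring A] [StarRing A] [Algebra ℂ A] (a : Γ → A) (X : Finset Γ) :
    Submodule ℂ A :=
  Submodule.span ℂ {m | ∃ (l : List Γ) (k : Γ → Fin 4),
    l.Nodup ∧ l.toFinset = X ∧ Even (carOddCount l k) ∧ m = carMonomial a l k}

/-- `𝔄_X⁻`: the linear span of the odd monomials supported in the finite set `X`. -/
def carSpanOdd {Γ A : Type*} [Ring A] [StarRing A] [Algebra ℂ A] (a : Γ → A) (X : Finset Γ) :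
    Submodule ℂ A :=
  Submodule.span ℂ {m | ∃ (l : List Γ) (k : Γ → Fin 4),
    l.Nodup ∧ l.toFinset = X ∧ Odd (carOddCount l k) ∧ m = carMonomial a l k}

section Helpers

variable {Γ A : Type*} [Ring A] [StarRing A]

def genList (a : Γ → A) (k : Fin 4) (x : Γ) : List A :=
  match k with
  | 0 => []
  | 1 => [a x]
  | 2 => [star (a x)]
  | 3 => [star (a x), a x]

lemma carFactor_eq_prod (a : Γ → A) (k : Fin 4) (x : Γ) :
    carFactor a k x = (genList a k x).prod := by
  fin_cases k <;> simp [carFactor, genList]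

def monList (a : Γ → A) (l : List Γ) (k : Γ → Fin 4) : List A :=
  (l.map fun x => genList a (k x) x).flatten

lemma fin4_cases (j : Fin 4) : j = 0 ∨ j = 1 ∨ j = 2 ∨ j = 3 := by revert j; decide

lemma carMonomial_eq_prod (a : Γ → A) (l : List Γ) (k : Γ → Fin 4) :
    carMonomial a l k = (monList a l k).prod := by
  simp [carMonomial, monList, List.prod_flatten, List.map_map, Function.comp_def,
    carFactor_eq_prod]

lemma carMonomial_cons (a : Γ → A) (x : Γ) (l : List Γ) (k : Γ → Fin 4) :
    carMonomial a (x :: l) k = carFactor a (k x) x * carMonomial a l k := by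
  simp [carMonomial]

lemma carMonomial_append (a : Γ → A) (l₁ l₂ : List Γ) (k : Γ → Fin 4) :
    carMonomial a (l₁ ++ l₂) k = carMonomial a l₁ k * carMonomial a l₂ k := by
  simp [carMonomial]

lemma carMonomial_congr (a : Γ → A) {l : List Γ} {k k' : Γ → Fin 4}
    (h : ∀ x ∈ l, k x = k' x) : carMonomial a l k = carMonomial a l k' := by
  unfold carMonomial
  congr 1
  exact List.map_congr_left fun x hx => by rw [h x hx]

lemma monList_length_mod_two (a : Γ → A) (l : List Γ) (k : Γ → Fin 4) :
    (monList a l k).length % 2 = carOddCount l k % 2 := by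
  induction l with
  | nil => rfl
  | cons x t ih =>
    have hgen : (genList a (k x) x).length % 2
        = (if k x = 1 ∨ k x = 2 then 1 else 0) % 2 := by
      rcases fin4_cases (k x) with h | h | h | h <;> simp [genList, h]
    have hm : (monList a (x :: t) k).length
        = (genList a (k x) x).length + (monList a t k).length := by
      simp [monList]
    have hc : carOddCount (x :: t) k
        = (if k x = 1 ∨ k x = 2 then 1 else 0) + carOddCount t k := by
      simp [carOddCount, List.countP_cons]
      split <;> simp_all <;> omega
    rw [hm, hc]
    omega

lemma mem_monList (a : Γ → A) (l : List Γ) (k : Γ → Fin 4) {u : A}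
    (hu : u ∈ monList a l k) : ∃ x ∈ l, u = a x ∨ u = star (a x) := by
  simp only [monList, List.mem_flatten, List.mem_map] at hu
  obtain ⟨L, ⟨x, hx, rfl⟩, huL⟩ := hu
  refine ⟨x, hx, ?_⟩
  rcases fin4_cases (k x) with h | h | h | h <;> rw [h] at huL <;>
    simp [genList] at huL <;> tauto

lemma base_anticomm {a : Γ → A} (hCAR : IsCAR a) {x y : Γ} (hxy : x ≠ y) {u v : A}
    (hu : u = a x ∨ u = star (a x)) (hv : v = a y ∨ v = star (a y)) :
    u * v = -(v * u) := by
  obtain ⟨h1, h2, h3⟩ := hCAR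
  rcases hu with rfl | rfl <;> rcases hv with rfl | rfl
  · have := h1 x y; rw [add_eq_zero_iff_eq_neg] at this; exact this
  · have := h3 x y; rw [if_neg hxy, add_eq_zero_iff_eq_neg] at this; exact this
  · have := h3 y x; rw [if_neg (Ne.symm hxy)] at this
    rw [eq_neg_iff_add_eq_zero, add_comm]; exact this
  · have := h2 x y; rw [add_eq_zero_iff_eq_neg] at this; exact this

lemma prod_mul_anticomm (L : List A) (q : A) (h : ∀ p ∈ L, p * q = -(q * p)) :
    L.prod * q = ((-1 : ℤ) ^ L.length) • (q * L.prod) := by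
  induction L with
  | nil => simp
  | cons p t ih =>
    have hp := h p (List.mem_cons_self)
    have ht := ih fun r hr => h r (List.mem_cons_of_mem _ hr)
    calc (p :: t).prod * q = p * (t.prod * q) := by
          rw [List.prod_cons, mul_assoc]
      _ = p * (((-1 : ℤ) ^ t.length) • (q * t.prod)) := by rw [ht]
      _ = ((-1 : ℤ) ^ t.length) • (p * q * t.prod) := by
          rw [mul_smul_comm, mul_assoc]
      _ = ((-1 : ℤ) ^ t.length) • (-(q * (p * t.prod))) := by
          rw [hp, neg_mul, mul_assoc]
      _ = ((-1 : ℤ) ^ (p :: t).length) • (q * (p :: t).prod) := by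
          rw [List.length_cons, pow_succ, List.prod_cons, mul_smul, neg_one_zsmul]

lemma prod_mul_prod_anticomm (L M : List A)
    (h : ∀ p ∈ L, ∀ q ∈ M, p * q = -(q * p)) :
    L.prod * M.prod = ((-1 : ℤ) ^ (L.length * M.length)) • (M.prod * L.prod) := by
  induction M with
  | nil => simp
  | cons q t ih =>
    have hq : ∀ p ∈ L, p * q = -(q * p) := fun p hp => h p hp q (List.mem_cons_self)
    have ht := ih fun p hp r hr => h p hp r (List.mem_cons_of_mem _ hr)
    calc L.prod * (q :: t).prod = (L.prod * q) * t.prod := by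
          rw [List.prod_cons, mul_assoc]
      _ = (((-1 : ℤ) ^ L.length) • (q * L.prod)) * t.prod := by
          rw [prod_mul_anticomm L q hq]
      _ = ((-1 : ℤ) ^ L.length) • (q * (L.prod * t.prod)) := by
          rw [smul_mul_assoc, mul_assoc]
      _ = ((-1 : ℤ) ^ L.length) • (q * (((-1 : ℤ) ^ (L.length * t.length)) • (t.prod * L.prod))) := by
          rw [ht]
      _ = ((-1 : ℤ) ^ (L.length * (q :: t).length)) • ((q :: t).prod * L.prod) := by
          rw [mul_smul_comm, smul_smul, ← pow_add, List.length_cons, List.prod_cons, mul_assoc]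
          ring_nf

lemma gen_mem (a : Γ → A) (k : Fin 4) (x : Γ) {u : A} (hu : u ∈ genList a k x) :
    u = a x ∨ u = star (a x) := by
  rcases fin4_cases k with h | h | h | h <;> rw [h] at hu <;> simp [genList] at hu <;> tauto

lemma factor_swap {a : Γ → A} (hCAR : IsCAR a) {x y : Γ} (hxy : x ≠ y) (j k : Fin 4) :
    ∃ s : ℤˣ, carFactor a j x * carFactor a k y
      = ((s : ℤ)) • (carFactor a k y * carFactor a j x) := by
  refine ⟨(-1) ^ ((genList a j x).length * (genList a k y).length), ?_⟩
  rw [carFactor_eq_prod, carFactor_eq_prod,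
    prod_mul_prod_anticomm _ _ fun u hu v hv =>
      base_anticomm hCAR hxy (gen_mem a j x hu) (gen_mem a k y hv)]
  norm_cast


lemma carMonomial_perm {a : Γ → A} (hCAR : IsCAR a) {l l' : List Γ}
    (h : l.Perm l') (k : Γ → Fin 4) :
    l.Nodup → ∃ s : ℤˣ, carMonomial a l k = ((s : ℤ)) • carMonomial a l' k := by
  induction h with
  | nil => exact fun _ => ⟨1, by simp⟩
  | cons x h ih =>
    intro hl
    obtain ⟨s, hs⟩ := ih hl.of_cons
    exact ⟨s, by rw [carMonomial_cons, carMonomial_cons, hs, mul_smul_comm]⟩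
  | swap x y t =>
    intro hl
    have hxy : y ≠ x := by
      have := (List.nodup_cons.mp hl).1
      intro h; exact this (h ▸ List.mem_cons_self)
    obtain ⟨s, hs⟩ := factor_swap hCAR hxy (k y) (k x)
    refine ⟨s, ?_⟩
    rw [carMonomial_cons, carMonomial_cons, carMonomial_cons, carMonomial_cons,
      ← mul_assoc, hs, smul_mul_assoc, mul_assoc]
  | trans h₁ h₂ ih₁ ih₂ =>
    intro hl
    obtain ⟨s₁, hs₁⟩ := ih₁ hl
    obtain ⟨s₂, hs₂⟩ := ih₂ (h₁.nodup hl)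
    refine ⟨s₁ * s₂, ?_⟩
    rw [hs₁, hs₂, smul_smul]
    norm_cast

end Helpers

section Rep

variable {Γ A : Type*} [Ring A] [StarRing A] [Algebra ℂ A]

lemma span_rep {a : Γ → A} (hCAR : IsCAR a) (X : Finset Γ) (lX : List Γ)
    (hnd : lX.Nodup) (hTF : lX.toFinset = X) {A₀ : A} (hA : A₀ ∈ carSpan a X) :
    ∃ c : (Γ → Fin 4) →₀ ℂ, (∀ p ∈ c.support, ∀ x, x ∉ X → p x = 0) ∧
      A₀ = c.sum fun p z => z • carMonomial a lX p := by
  induction hA using Submodule.span_induction with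
  | mem m hm =>
    obtain ⟨l', k', hnd', hTF', rfl⟩ := hm
    have hperm : l'.Perm lX :=
      List.perm_of_nodup_nodup_toFinset_eq hnd' hnd (hTF'.trans hTF.symm)
    obtain ⟨s, hs⟩ := carMonomial_perm hCAR hperm k' hnd'
    set p : Γ → Fin 4 := fun x => if x ∈ X then k' x else 0 with hp
    have hkp : carMonomial a lX k' = carMonomial a lX p := by
      refine carMonomial_congr a fun x hx => ?_
      rw [hp]; simp only [if_pos (hTF ▸ List.mem_toFinset.mpr hx)]
    refine ⟨Finsupp.single p ((s : ℤ) : ℂ), ?_, ?_⟩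
    · intro q hq x hx
      have := Finsupp.support_single_subset hq
      simp only [Finset.mem_singleton] at this
      subst this
      rw [hp]; simp [hx]
    · rw [Finsupp.sum_single_index (by simp), hs, hkp, Int.cast_smul_eq_zsmul]
  | zero => exact ⟨0, by simp, by simp⟩
  | add u v hu hv ihu ihv =>
    obtain ⟨c₁, h₁, rfl⟩ := ihu
    obtain ⟨c₂, h₂, rfl⟩ := ihv
    refine ⟨c₁ + c₂, ?_, ?_⟩
    · intro q hq
      rcases Finset.mem_union.mp (Finsupp.support_add hq) with h | h
      exacts [h₁ q h, h₂ q h]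
    · rw [Finsupp.sum_add_index (fun p _ => by simp) (fun p _ z₁ z₂ => add_smul z₁ z₂ _)]
  | smul z u hu ihu =>
    obtain ⟨c, h₁, rfl⟩ := ihu
    refine ⟨z • c, ?_, ?_⟩
    · intro q hq
      exact h₁ q (Finsupp.support_smul hq)
    · rw [Finsupp.sum_smul_index (fun p => by simp), Finsupp.smul_sum]
      exact Finset.sum_congr rfl fun p _ => (mul_smul z (c p) _).symm

end Rep

section Main

variable {Γ A : Type*} [Ring A] [StarRing A] [Algebra ℂ A]

lemma part1 {a : Γ → A} (hCAR : IsCAR a) (X Y : Finset Γ) (hXY : Disjoint X Y) :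
    ∀ A₀ ∈ carSpanOdd a X, ∀ B₀ ∈ carSpanOdd a Y, A₀ * B₀ + B₀ * A₀ = 0 := by
  intro A₀ hA
  induction hA using Submodule.span_induction with
  | mem m hm =>
    intro B₀ hB
    induction hB using Submodule.span_induction with
    | mem n hn =>
      obtain ⟨l₁, k₁, hnd₁, hTF₁, hodd₁, rfl⟩ := hm
      obtain ⟨l₂, k₂, hnd₂, hTF₂, hodd₂, rfl⟩ := hn
      have hdisj : ∀ u ∈ monList a l₁ k₁, ∀ v ∈ monList a l₂ k₂, u * v = -(v * u) := by
        intro u hu v hv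
        obtain ⟨x, hx, hux⟩ := mem_monList a l₁ k₁ hu
        obtain ⟨y, hy, hvy⟩ := mem_monList a l₂ k₂ hv
        have hxX : x ∈ X := by rw [← hTF₁]; exact List.mem_toFinset.mpr hx
        have hyY : y ∈ Y := by rw [← hTF₂]; exact List.mem_toFinset.mpr hy
        refine base_anticomm hCAR ?_ hux hvy
        rintro rfl
        exact Finset.disjoint_left.mp hXY hxX hyY
      have hkey := prod_mul_prod_anticomm (monList a l₁ k₁) (monList a l₂ k₂) hdisj
      rw [← carMonomial_eq_prod, ← carMonomial_eq_prod] at hkey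
      have hodd : Odd ((monList a l₁ k₁).length * (monList a l₂ k₂).length) := by
        refine Nat.odd_mul.mpr ⟨?_, ?_⟩ <;> rw [Nat.odd_iff, monList_length_mod_two]
        · exact Nat.odd_iff.mp hodd₁
        · exact Nat.odd_iff.mp hodd₂
      rw [hodd.neg_one_pow, neg_one_zsmul] at hkey
      rw [hkey, neg_add_cancel]
    | zero => simp
    | add u v hu hv ihu ihv =>
      have h : m * (u + v) + (u + v) * m = (m * u + u * m) + (m * v + v * m) := by
        rw [mul_add, add_mul]; abel
      rw [h, ihu, ihv, add_zero]
    | smul z u hu ihu =>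
      rw [mul_smul_comm, smul_mul_assoc, ← smul_add, ihu, smul_zero]
  | zero => intro B₀ _; simp
  | add u v hu hv ihu ihv =>
    intro B₀ hB
    have h : (u + v) * B₀ + B₀ * (u + v) = (u * B₀ + B₀ * u) + (v * B₀ + B₀ * v) := by
      rw [mul_add, add_mul]; abel
    rw [h, ihu B₀ hB, ihv B₀ hB, add_zero]
  | smul z u hu ihu =>
    intro B₀ hB
    rw [mul_smul_comm, smul_mul_assoc, ← smul_add, ihu B₀ hB, smul_zero]

end Main

/-- if `A ∈ 𝔄_X⁻` and `B ∈ 𝔄_Y⁻` with `X ∩ Y = ∅` then `{A,B} = 0`; conversely,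
if the monomials supported in `X ∪ Y` (for a fixed enumeration `l`) are linearly independent,
`A ∈ 𝔄_X`, `B ∈ 𝔄_Y` and `{A,B} = 0`, then `A = 0`, or `B = 0`, or both `A ∈ 𝔄_X⁻` and
`B ∈ 𝔄_Y⁻`. -/
theorem anticommutator_vanishes_iff_odd
    {Γ A : Type*} [NormedRing A] [StarRing A] [CStarRing A] [NormedAlgebra ℂ A]
    (a : Γ → A) (hCAR : IsCAR a)
    (X Y : Finset Γ) (hXY : Disjoint X Y)
    (l : List Γ) (hl : l.Nodup) (hlXY : l.toFinset = X ∪ Y)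
    (hind : LinearIndependent ℂ fun k : {x // x ∈ X ∪ Y} → Fin 4 =>
      carMonomial a l fun x => if h : x ∈ X ∪ Y then k ⟨x, h⟩ else 0) :
    (∀ A₀ ∈ carSpanOdd a X, ∀ B₀ ∈ carSpanOdd a Y, A₀ * B₀ + B₀ * A₀ = 0) ∧
    (∀ A₀ ∈ carSpan a X, ∀ B₀ ∈ carSpan a Y, A₀ * B₀ + B₀ * A₀ = 0 →
      A₀ = 0 ∨ B₀ = 0 ∨ (A₀ ∈ carSpanOdd a X ∧ B₀ ∈ carSpanOdd a Y)) := by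
  refine ⟨part1 hCAR X Y hXY, ?_⟩
  intro A₀ hA B₀ hB hAB
  by_cases hA0 : A₀ = 0
  · exact Or.inl hA0
  by_cases hB0 : B₀ = 0
  · exact Or.inr (Or.inl hB0)
  refine Or.inr (Or.inr ?_)
  -- setup: canonical enumerations of X and Y
  set lX : List Γ := l.filter (fun x => decide (x ∈ X)) with hlXdef
  set lY : List Γ := l.filter (fun x => decide (x ∈ Y)) with hlYdef
  have hmem_l : ∀ x, x ∈ l ↔ x ∈ X ∪ Y := fun x => by
    rw [← List.mem_toFinset, hlXY]
  have hndX : lX.Nodup := hl.filter _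
  have hndY : lY.Nodup := hl.filter _
  have hmem_lX : ∀ x, x ∈ lX ↔ x ∈ X := by
    intro x
    simp only [hlXdef, List.mem_filter, decide_eq_true_eq]
    exact ⟨fun h => h.2, fun h => ⟨(hmem_l x).mpr (Finset.mem_union_left _ h), h⟩⟩
  have hmem_lY : ∀ x, x ∈ lY ↔ x ∈ Y := by
    intro x
    simp only [hlYdef, List.mem_filter, decide_eq_true_eq]
    exact ⟨fun h => h.2, fun h => ⟨(hmem_l x).mpr (Finset.mem_union_right _ h), h⟩⟩
  have hTFX : lX.toFinset = X := by ext x; rw [List.mem_toFinset]; exact hmem_lX x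
  have hTFY : lY.toFinset = Y := by ext x; rw [List.mem_toFinset]; exact hmem_lY x
  obtain ⟨cA, hcA, hArep⟩ := span_rep hCAR X lX hndX hTFX hA
  obtain ⟨cB, hcB, hBrep⟩ := span_rep hCAR Y lY hndY hTFY hB
  -- the combined pattern
  set comb : (Γ → Fin 4) → (Γ → Fin 4) → Γ → Fin 4 :=
    fun p q x => if x ∈ X then p x else q x with hcomb
  have hMX : ∀ p q, carMonomial a lX p = carMonomial a lX (comb p q) := by
    intro p q
    refine carMonomial_congr a fun x hx => ?_
    rw [hcomb]; simp only [if_pos ((hmem_lX x).mp hx)]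
  have hMY : ∀ p q, carMonomial a lY q = carMonomial a lY (comb p q) := by
    intro p q
    refine carMonomial_congr a fun x hx => ?_
    have hxY : x ∈ Y := (hmem_lY x).mp hx
    have hxX : x ∉ X := fun h => Finset.disjoint_left.mp hXY h hxY
    rw [hcomb]; simp only [if_neg hxX]
  have hndXY : (lX ++ lY).Nodup := by
    refine List.Nodup.append hndX hndY ?_
    intro x hx hy
    exact Finset.disjoint_left.mp hXY ((hmem_lX x).mp hx) ((hmem_lY x).mp hy)
  have hpermXY : (lX ++ lY).Perm l := by
    refine List.perm_of_nodup_nodup_toFinset_eq hndXY hl ?_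
    rw [List.toFinset_append, hTFX, hTFY, hlXY]
  have prod_eq : ∀ p q, ∃ s : ℤˣ,
      carMonomial a lX p * carMonomial a lY q
        = ((s : ℤ)) • carMonomial a l
            (fun x => if h : x ∈ X ∪ Y then comb p q x else 0) := by
    intro p q
    obtain ⟨s, hs⟩ := carMonomial_perm hCAR hpermXY (comb p q) hndXY
    refine ⟨s, ?_⟩
    rw [hMX p q, hMY p q, ← carMonomial_append, hs]
    congr 1
    refine carMonomial_congr a fun x hx => ?_
    rw [dif_pos ((hmem_l x).mp hx)]
  choose sgn hsgn using prod_eq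
  set nX : (Γ → Fin 4) → ℕ := fun p => (monList a lX p).length with hnX
  set nY : (Γ → Fin 4) → ℕ := fun q => (monList a lY q).length with hnY
  have hswap : ∀ p q, carMonomial a lY q * carMonomial a lX p
      = ((-1 : ℤ) ^ (nX p * nY q)) • (carMonomial a lX p * carMonomial a lY q) := by
    intro p q
    have hanti : ∀ u ∈ monList a lY q, ∀ v ∈ monList a lX p, u * v = -(v * u) := by
      intro u hu v hv
      obtain ⟨y, hy, huy⟩ := mem_monList a lY q hu
      obtain ⟨x, hx, hvx⟩ := mem_monList a lX p hv
      have hyY : y ∈ Y := (hmem_lY y).mp hy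
      have hxX : x ∈ X := (hmem_lX x).mp hx
      refine base_anticomm hCAR ?_ huy hvx
      rintro rfl
      exact Finset.disjoint_left.mp hXY hxX hyY
    have := prod_mul_prod_anticomm (monList a lY q) (monList a lX p) hanti
    rw [← carMonomial_eq_prod, ← carMonomial_eq_prod] at this
    rw [this, mul_comm (nY q) (nX p)]
  set T : Finset ((Γ → Fin 4) × (Γ → Fin 4)) := cA.support ×ˢ cB.support with hT
  set d : (Γ → Fin 4) × (Γ → Fin 4) → ℂ := fun z =>
    cA z.1 * cB z.2 * (((1 + (-1 : ℤ) ^ (nX z.1 * nY z.2)) * (sgn z.1 z.2 : ℤ) : ℤ) : ℂ)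
    with hd
  have hsum : ∑ z ∈ T, d z • carMonomial a l
      (fun x => if h : x ∈ X ∪ Y then comb z.1 z.2 x else 0) = 0 := by
    have step : ∑ z ∈ T, d z • carMonomial a l
        (fun x => if h : x ∈ X ∪ Y then comb z.1 z.2 x else 0)
        = ∑ z ∈ T, ((cA z.1 * cB z.2) • (carMonomial a lX z.1 * carMonomial a lY z.2)
            + (cB z.2 * cA z.1) • (carMonomial a lY z.2 * carMonomial a lX z.1)) := by
      refine Finset.sum_congr rfl fun z _ => ?_
      rw [hswap z.1 z.2, hsgn z.1 z.2]
      rw [← Int.cast_smul_eq_zsmul ℂ, ← Int.cast_smul_eq_zsmul ℂ,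
        smul_smul, smul_smul, smul_smul, ← add_smul, hd]
      congr 1
      push_cast
      ring
    have e1 : ∑ z ∈ T, (cA z.1 * cB z.2)
        • (carMonomial a lX z.1 * carMonomial a lY z.2) = A₀ * B₀ := by
      rw [hArep, hBrep, Finsupp.sum, Finsupp.sum, Finset.sum_mul_sum, hT,
        Finset.sum_product]
      exact Finset.sum_congr rfl fun p _ => Finset.sum_congr rfl fun q _ =>
        (smul_mul_smul_comm _ _ _ _).symm
    have e2 : ∑ z ∈ T, (cB z.2 * cA z.1)
        • (carMonomial a lY z.2 * carMonomial a lX z.1) = B₀ * A₀ := by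
      rw [hBrep, hArep, Finsupp.sum, Finsupp.sum, Finset.sum_mul_sum, hT,
        Finset.sum_product, Finset.sum_comm]
      exact Finset.sum_congr rfl fun q _ => Finset.sum_congr rfl fun p _ =>
        (smul_mul_smul_comm _ _ _ _).symm
    rw [step, Finset.sum_add_distrib, e1, e2, hAB]
  have hι : Function.Injective (fun z : {z // z ∈ T} =>
      fun x : {x // x ∈ X ∪ Y} => comb z.1.1 z.1.2 x.1) := by
    rintro ⟨⟨p, q⟩, hz⟩ ⟨⟨p', q'⟩, hz'⟩ h
    rw [hT, Finset.mem_product] at hz hz'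
    simp only at h hz hz'
    have hp : p = p' := by
      funext x
      by_cases hx : x ∈ X
      · have hx' : x ∈ X ∪ Y := Finset.mem_union_left _ hx
        have := congrFun h ⟨x, hx'⟩
        simpa only [hcomb, if_pos hx] using this
      · rw [hcA p hz.1 x hx, hcA p' hz'.1 x hx]
    have hq : q = q' := by
      funext x
      by_cases hx : x ∈ Y
      · have hx' : x ∈ X ∪ Y := Finset.mem_union_right _ hx
        have hxX : x ∉ X := fun hh => Finset.disjoint_left.mp hXY hh hx
        have := congrFun h ⟨x, hx'⟩
        simpa only [hcomb, if_neg hxX] using this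
      · rw [hcB q hz.2 x hx, hcB q' hz'.2 x hx]
    subst hp; subst hq; rfl
  have hIndT := hind.comp _ hι
  have hzero : ∀ z ∈ T, d z = 0 := by
    intro z hz
    refine linearIndependent_iff'.mp hIndT Finset.univ (fun w => d w.1) ?_
      ⟨z, hz⟩ (Finset.mem_univ _)
    exact (Finset.sum_coe_sort T fun z => d z • carMonomial a l
      (fun x => if h : x ∈ X ∪ Y then comb z.1 z.2 x else 0)).trans hsum
  have key : ∀ p ∈ cA.support, ∀ q ∈ cB.support, Odd (nX p) ∧ Odd (nY q) := by
    intro p hp q hq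
    have hd0 := hzero (p, q) (by rw [hT]; exact Finset.mem_product.mpr ⟨hp, hq⟩)
    rw [hd] at hd0
    simp only at hd0
    have hcAp : cA p ≠ 0 := Finsupp.mem_support_iff.mp hp
    have hcBq : cB q ≠ 0 := Finsupp.mem_support_iff.mp hq
    have h1 : (((1 + (-1 : ℤ) ^ (nX p * nY q)) * (sgn p q : ℤ) : ℤ) : ℂ) = 0 := by
      rcases mul_eq_zero.mp hd0 with h | h
      · rcases mul_eq_zero.mp h with h | h
        · exact (hcAp h).elim
        · exact (hcBq h).elim
      · exact h
    rw [Int.cast_eq_zero, mul_eq_zero] at h1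
    have h2 : 1 + (-1 : ℤ) ^ (nX p * nY q) = 0 := h1.resolve_right (Units.ne_zero _)
    have hoddmul : Odd (nX p * nY q) := by
      by_contra hcon
      rw [Nat.not_odd_iff_even] at hcon
      rw [hcon.neg_one_pow] at h2
      norm_num at h2
    exact Nat.odd_mul.mp hoddmul
  have hcAne : cA ≠ 0 := by
    intro h; exact hA0 (by rw [hArep, h, Finsupp.sum_zero_index])
  have hcBne : cB ≠ 0 := by
    intro h; exact hB0 (by rw [hBrep, h, Finsupp.sum_zero_index])
  obtain ⟨p₀, hp₀⟩ := Finsupp.support_nonempty_iff.mpr hcAne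
  obtain ⟨q₀, hq₀⟩ := Finsupp.support_nonempty_iff.mpr hcBne
  constructor
  · rw [hArep, Finsupp.sum]
    refine Submodule.sum_mem _ fun p hp => Submodule.smul_mem _ _
      (Submodule.subset_span ⟨lX, p, hndX, hTFX, ?_, rfl⟩)
    have hodd := (key p hp q₀ hq₀).1
    rw [hnX] at hodd
    simp only at hodd
    rw [Nat.odd_iff] at hodd ⊢
    rw [← monList_length_mod_two a lX p]
    exact hodd
  · rw [hBrep, Finsupp.sum]
    refine Submodule.sum_mem _ fun q hq => Submodule.smul_mem _ _
      (Submodule.subset_span ⟨lY, q, hndY, hTFY, ?_, rfl⟩)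
    have hodd := (key p₀ hp₀ q hq).2
    rw [hnY] at hodd
    simp only at hodd
    rw [Nat.odd_iff] at hodd ⊢
    rw [← monList_length_mod_two a lY q]
    exact hodd
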